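/- In an infinite-horizon discounted Markov pseudo-game, let π* be a Markov policy profile such that for every player i and every state s, the action π*_i(s) maximizes a_i ↦ Q_i^{π*}(s, a_i, π*_{-i}(s)) over the feasible set X_i(s, π*_{-i}(s)), where Q_i^{π*}(s, a) = r_i(s, a) + γ E_{s' ∼ P(·|s,a)}[V_i^{π*}(s')]. Then for every player i, every feasible (possibly history-dependent) deviation π_i ∈ F_i(π*_{-i}), and every state s, V_i^{π*}(s) ≥ V_i^{(π_i, π*_{-i})}(s); i.e., greedy optimality with respect to one's own action-value function implies that π* is a generalized Markov perfect equilibrium. -/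

import Mathlib

open MeasureTheory

/-- In an infinite-horizon discounted Markov pseudo-game, if the Markov
profile `πstar` is feasible and greedy with respect to its own action-value functions
(`Q_i(s,a) = r_i(s,a) + γ E_{s'∼P(s,a)}[V_i(s')]`, where `V_i` is the bounded value of
`πstar`), then for every player `i`, every feasible history-dependent deviation `σ`
(whose bounded value function `W` satisfies the corresponding Bellman recursion along
histories), and every state `s`, `V_i(s) ≥ W([], s)`: greedy optimality implies
generalized Markov perfection. -/
theorem stmt_10 {S : Type*} [MeasurableSpace S] {ι : Type*} [Fintype ι] [DecidableEq ι]
    {A : ι → Type*}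
    (X : (i : ι) → S → (∀ j, A j) → Set (A i))
    (r : ι → S → (∀ j, A j) → ℝ)
    (P : S → (∀ j, A j) → Measure S)
    (hP : ∀ s a, IsProbabilityMeasure (P s a))
    (γ : ℝ) (hγ : γ ∈ Set.Ioo (0:ℝ) 1)
    (πstar : (i : ι) → S → A i)
    (V : ι → S → ℝ)
    (Mb : ℝ) (hVb : ∀ i s, |V i s| ≤ Mb) (hrb : ∀ i s a, |r i s a| ≤ Mb)
    (hVm : ∀ i, Measurable (V i))
    (hfeas : ∀ i s, πstar i s ∈ X i s (fun j => πstar j s))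
    (hV : ∀ i s, V i s =
      r i s (fun j => πstar j s) + γ * ∫ s', V i s' ∂(P s (fun j => πstar j s)))
    (hgreedy : ∀ i s, ∀ ai ∈ X i s (fun j => πstar j s),
      r i s (Function.update (fun j => πstar j s) i ai)
        + γ * ∫ s', V i s' ∂(P s (Function.update (fun j => πstar j s) i ai))
      ≤ V i s)
    (i : ι)
    (σ : List (S × (∀ j, A j)) × S → A i)
    (hσ : ∀ h : List (S × (∀ j, A j)) × S, σ h ∈ X i h.2 (fun j => πstar j h.2))
    (W : List (S × (∀ j, A j)) × S → ℝ)
    (hWb : ∀ h, |W h| ≤ Mb)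
    (hWm : ∀ l : List (S × (∀ j, A j)), Measurable fun s => W (l, s))
    (hW : ∀ h : List (S × (∀ j, A j)) × S,
      W h = r i h.2 (Function.update (fun j => πstar j h.2) i (σ h))
        + γ * ∫ s',
            W (h.1 ++ [(h.2, Function.update (fun j => πstar j h.2) i (σ h))], s')
          ∂(P h.2 (Function.update (fun j => πstar j h.2) i (σ h)))) :
    ∀ s, W ([], s) ≤ V i s := by
  -- Key: for every n and every history h, W h - V i h.2 ≤ γ^n * (2*Mb).
  have key : ∀ n : ℕ, ∀ h : List (S × (∀ j, A j)) × S,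
      W h - V i h.2 ≤ γ ^ n * (2 * Mb) := by
    intro n
    induction n with
    | zero =>
      intro h
      simp only [pow_zero, one_mul]
      have h1 := hWb h
      have h2 := hVb i h.2
      have := abs_le.1 h1
      have := abs_le.1 h2
      linarith [ (abs_le.1 h1).2, (abs_le.1 h2).1 ]
    | succ n ih =>
      intro h
      set a : ∀ j, A j := Function.update (fun j => πstar j h.2) i (σ h) with ha
      set l : List (S × (∀ j, A j)) := h.1 ++ [(h.2, a)] with hl
      haveI := hP h.2 a
      have hint1 : Integrable (fun s' => W (l, s')) (P h.2 a) :=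
        ⟨(hWm l).aestronglyMeasurable,
          HasFiniteIntegral.of_bounded (C := Mb)
            (Filter.Eventually.of_forall fun s' => by
              simpa [Real.norm_eq_abs] using hWb (l, s'))⟩
      have hint2 : Integrable (fun s' => V i s') (P h.2 a) :=
        ⟨(hVm i).aestronglyMeasurable,
          HasFiniteIntegral.of_bounded (C := Mb)
            (Filter.Eventually.of_forall fun s' => by
              simpa [Real.norm_eq_abs] using hVb i s')⟩
      have hmono : (∫ s', W (l, s') ∂(P h.2 a))
          ≤ (∫ s', V i s' ∂(P h.2 a)) + γ ^ n * (2 * Mb) := by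
        have : (∫ s', W (l, s') ∂(P h.2 a))
            ≤ ∫ s', (V i s' + γ ^ n * (2 * Mb)) ∂(P h.2 a) := by
          refine integral_mono hint1 (hint2.add (integrable_const _)) ?_
          intro s'
          have := ih (l, s')
          simpa using by linarith [ih (l, s')]
        rwa [integral_add hint2 (integrable_const _), integral_const,
          probReal_univ, smul_eq_mul, one_mul] at this
      have hWh := hW h
      have hg := hgreedy i h.2 (σ h) (hσ h)
      have hγ0 : 0 < γ := hγ.1
      calc W h - V i h.2
          = r i h.2 a + γ * ∫ s', W (l, s') ∂(P h.2 a) - V i h.2 := by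
            rw [hWh]
        _ ≤ r i h.2 a + γ * ((∫ s', V i s' ∂(P h.2 a)) + γ ^ n * (2 * Mb))
              - V i h.2 := by nlinarith [hmono]
        _ = (r i h.2 a + γ * ∫ s', V i s' ∂(P h.2 a) - V i h.2)
              + γ ^ (n + 1) * (2 * Mb) := by ring
        _ ≤ γ ^ (n + 1) * (2 * Mb) := by
            have : r i h.2 a + γ * ∫ s', V i s' ∂(P h.2 a) ≤ V i h.2 := hg
            linarith
  intro s
  have hlim : Filter.Tendsto (fun n : ℕ => γ ^ n * (2 * Mb)) Filter.atTop (nhds 0) := by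
    have : Filter.Tendsto (fun n : ℕ => γ ^ n) Filter.atTop (nhds 0) :=
      tendsto_pow_atTop_nhds_zero_of_lt_one (le_of_lt hγ.1) hγ.2
    simpa using this.mul_const (2 * Mb)
  have : W ([], s) - V i s ≤ 0 :=
    ge_of_tendsto' hlim fun n => key n ([], s)
  linarith
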